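/- Let p ≥ 2 and let X be a real Banach space whose norm is uniformly smooth and uniformly convex with modulus of convexity of power type p. Let f : X → ℝ be uniformly continuous on X (not necessarily bounded below). Then Δ_n^p f → f uniformly on X as n → ∞. -/

import Mathlib

open scoped BigOperators

/-- The convex envelope of a function `h : X → ℝ`, given by the infimum over all
finite convex combinations. -/
noncomputable def convEnv {X : Type*} [NormedAddCommGroup X] [NormedSpace ℝ X]
    (h : X → ℝ) (x : X) : ℝ :=
  sInf { r : ℝ | ∃ (m : ℕ) (l : Fin m → ℝ) (z : Fin m → X),
    (∀ i, 0 < l i) ∧ ∑ i, l i = 1 ∧ ∑ i, l i • z i = x ∧ ∑ i, l i * h (z i) = r }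

/-- The kernel `K_p(x,y) = 2^(p-1)‖x‖^p + 2^(p-1)‖y‖^p - ‖x+y‖^p`. -/
noncomputable def Kp {X : Type*} [NormedAddCommGroup X] (p : ℝ) (x y : X) : ℝ :=
  2 ^ (p - 1) * ‖x‖ ^ p + 2 ^ (p - 1) * ‖y‖ ^ p - ‖x + y‖ ^ p

/-- `g_n^p(x) = inf_y (f(y) + n K_p(x,y)) + 2^(p-1) n ‖x‖^p` for real-valued `f`. -/
noncomputable def gnpR {X : Type*} [NormedAddCommGroup X] (p : ℝ) (f : X → ℝ)
    (n : ℕ) (x : X) : ℝ :=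
  (⨅ y, f y + (n : ℝ) * Kp p x y) + 2 ^ (p - 1) * (n : ℝ) * ‖x‖ ^ p

/-- `Δ_n^p f = co(g_n^p) - 2^(p-1) n ‖·‖^p` for real-valued `f`. -/
noncomputable def DeltaR {X : Type*} [NormedAddCommGroup X] [NormedSpace ℝ X]
    (p : ℝ) (f : X → ℝ) (n : ℕ) (x : X) : ℝ :=
  convEnv (gnpR p f n) x - 2 ^ (p - 1) * (n : ℝ) * ‖x‖ ^ p


open Real
open scoped NNReal

lemma auxSuperadd {p a b : ℝ} (hp : 1 ≤ p) (ha : 0 ≤ a) (hb : 0 ≤ b) :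
    a ^ p + b ^ p ≤ (a + b) ^ p := by
  have key := NNReal.coe_le_coe.2 (NNReal.add_rpow_le_rpow_add a.toNNReal b.toNNReal hp)
  simpa [NNReal.coe_rpow, Real.coe_toNNReal _ ha, Real.coe_toNNReal _ hb] using key

lemma auxMidpoint {p a b : ℝ} (hp : 1 ≤ p) (ha : 0 ≤ a) (hb : 0 ≤ b) :
    ((a + b) / 2) ^ p ≤ (a ^ p + b ^ p) / 2 := by
  have h := (convexOn_rpow hp).2 (Set.mem_Ici.2 ha) (Set.mem_Ici.2 hb)
    (by norm_num : (0:ℝ) ≤ 1/2) (by norm_num : (0:ℝ) ≤ 1/2) (by norm_num)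
  simp only [smul_eq_mul] at h
  calc ((a + b) / 2) ^ p = (1/2 * a + 1/2 * b) ^ p := by ring_nf
    _ ≤ 1/2 * a ^ p + 1/2 * b ^ p := h
    _ = (a ^ p + b ^ p) / 2 := by ring

lemma auxTangent {p x y : ℝ} (hp : 2 ≤ p) (hx : 0 ≤ x) (hy : 0 ≤ y) :
    x ^ p + p * x ^ (p - 1) * (y - x) ≤ y ^ p := by
  have hp1 : (1:ℝ) ≤ p := by linarith
  rcases eq_or_lt_of_le hx with h0 | h0
  · rw [← h0, Real.zero_rpow (ne_of_gt (by linarith) : p ≠ 0), Real.zero_rpow (ne_of_gt (by linarith) : p - 1 ≠ 0)]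
    simpa using Real.rpow_nonneg hy p
  · set s := y / x - 1 with hs
    have hs1 : -1 ≤ s := by
      have : 0 ≤ y / x := div_nonneg hy h0.le
      simp only [hs]; linarith
    have hb := one_add_mul_self_le_rpow_one_add hs1 hp1
    have h1s : 1 + s = y / x := by simp [hs]
    rw [h1s] at hb
    have hxp : (0:ℝ) < x ^ p := Real.rpow_pos_of_pos h0 p
    have hmul := mul_le_mul_of_nonneg_left hb hxp.le
    have hdiv : x ^ p * (y / x) ^ p = y ^ p := by
      rw [← Real.mul_rpow h0.le (div_nonneg hy h0.le), mul_div_cancel₀ _ h0.ne']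
    rw [hdiv] at hmul
    have hxp1 : x ^ p = x ^ (p - 1) * x := by
      rw [← Real.rpow_add_one h0.ne' (p - 1)]; ring_nf
    calc x ^ p + p * x ^ (p - 1) * (y - x)
        = x ^ p * (1 + p * s) := by
          have hkey : x * s = y - x := by rw [hs, mul_sub, mul_div_cancel₀ _ h0.ne', mul_one]
          rw [hxp1, show x ^ (p - 1) * x * (1 + p * s) = x ^ (p - 1) * x + p * x ^ (p - 1) * (x * s) by ring, hkey]
      _ ≤ y ^ p := hmul

lemma auxUV {p u v : ℝ} (hp : 2 ≤ p) (hv : 0 ≤ v) (huv : v ≤ u) :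
    2 * (u ^ p + v ^ p) ≤ (u + v) ^ p + (u - v) ^ p := by
  have hu : 0 ≤ u := le_trans hv huv
  have hq : (1:ℝ) ≤ p / 2 := by linarith
  have e1 : ∀ w : ℝ, 0 ≤ w → w ^ p = (w ^ (2:ℝ)) ^ (p / 2) := by
    intro w hw
    rw [← Real.rpow_mul hw]
    congr 1
    ring
  have e2 : ∀ w : ℝ, w ^ (2:ℝ) = w ^ (2:ℕ) := fun w => by
    rw [show (2:ℝ) = ((2:ℕ):ℝ) by norm_num, Real.rpow_natCast]
  have sq_nonneg' : ∀ w : ℝ, (0:ℝ) ≤ w ^ (2:ℝ) := fun w => by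
    rw [e2]; positivity
  -- step 1 : u^p + v^p ≤ (u² + v²)^{p/2}
  have step1 : u ^ p + v ^ p ≤ (u ^ (2:ℝ) + v ^ (2:ℝ)) ^ (p/2) := by
    rw [e1 u hu, e1 v hv]
    exact auxSuperadd hq (sq_nonneg' u) (sq_nonneg' v)
  -- step 2 : (u²+v²)^{p/2} ≤ ((u+v)^p + (u-v)^p)/2
  have hsum : u ^ (2:ℝ) + v ^ (2:ℝ) = ((u+v) ^ (2:ℝ) + (u-v) ^ (2:ℝ)) / 2 := by
    rw [e2 u, e2 v, e2 (u+v), e2 (u-v)]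
    ring
  have step2 : (u ^ (2:ℝ) + v ^ (2:ℝ)) ^ (p/2) ≤ ((u+v) ^ p + (u-v) ^ p) / 2 := by
    rw [hsum]
    calc (((u+v) ^ (2:ℝ) + (u-v) ^ (2:ℝ)) / 2) ^ (p/2)
        ≤ (((u+v) ^ (2:ℝ)) ^ (p/2) + ((u-v) ^ (2:ℝ)) ^ (p/2)) / 2 :=
          auxMidpoint hq (sq_nonneg' _) (sq_nonneg' _)
      _ = ((u+v) ^ p + (u-v) ^ p) / 2 := by
          rw [← e1 (u+v) (by linarith), ← e1 (u-v) (by linarith)]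
  linarith

lemma auxClarkson {p a b : ℝ} (hp : 2 ≤ p) (ha : 0 ≤ a) (hb : 0 ≤ b) :
    (a + b) ^ p + |a - b| ^ p ≤ 2 ^ (p - 1) * (a ^ p + b ^ p) := by
  have main : ∀ a b : ℝ, 0 ≤ b → b ≤ a →
      (a + b) ^ p + |a - b| ^ p ≤ 2 ^ (p - 1) * (a ^ p + b ^ p) := by
    intro a b hb hba
    set u := (a + b) / 2 with hu
    set v := (a - b) / 2 with hv
    have hv0 : 0 ≤ v := by simp [hv]; linarith
    have huv : v ≤ u := by simp [hu, hv]; linarith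
    have key := auxUV hp hv0 huv
    have hab : a = u + v := by simp [hu, hv]; ring
    have hba' : b = u - v := by simp [hu, hv]; ring
    have habs : |a - b| = 2 * v := by rw [abs_of_nonneg (by linarith)]; simp [hv]; ring
    have h2u : a + b = 2 * u := by simp [hu]; ring
    rw [habs, h2u, hab, hba']
    have hu0 : 0 ≤ u := le_trans hv0 huv
    have h2p : ∀ w : ℝ, 0 ≤ w → (2 * w) ^ p = 2 ^ p * w ^ p := fun w hw =>
      Real.mul_rpow (by norm_num) hw
    rw [h2p u hu0, h2p v hv0]
    have h2pow : (2:ℝ) ^ p = 2 ^ (p - 1) * 2 := by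
      rw [← Real.rpow_add_one (by norm_num : (2:ℝ) ≠ 0) (p - 1)]; ring_nf
    have h2pos : (0:ℝ) < 2 ^ (p - 1) := Real.rpow_pos_of_pos (by norm_num) _
    rw [h2pow]
    nlinarith [key, h2pos]
  rcases le_total b a with h | h
  · exact main a b hb h
  · have := main b a ha h
    rw [abs_sub_comm, add_comm b a, add_comm (b ^ p) (a ^ p)] at this
    linarith [this]

lemma auxYoung {p κ b t : ℝ} (hp : 2 ≤ p) (hκ : 0 < κ) (hb : 0 ≤ b) (ht : 0 ≤ t) :
    b * t ≤ κ * t ^ p + b * (b / κ) ^ (1 / (p - 1)) := by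
  set T := (b / κ) ^ (1 / (p - 1)) with hT
  have hT0 : 0 ≤ T := Real.rpow_nonneg (div_nonneg hb hκ.le) _
  have hp1 : (0:ℝ) < p - 1 := by linarith
  rcases le_or_gt t T with h | h
  · have h1 : b * t ≤ b * T := mul_le_mul_of_nonneg_left h hb
    have h2 : 0 ≤ κ * t ^ p := mul_nonneg hκ.le (Real.rpow_nonneg ht _)
    linarith
  · have ht0 : 0 < t := lt_of_le_of_lt hT0 h
    have hTp : T ^ (p - 1) = b / κ := by
      rw [hT, one_div, Real.rpow_inv_rpow (div_nonneg hb hκ.le) hp1.ne']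
    have hmono : T ^ (p - 1) ≤ t ^ (p - 1) := Real.rpow_le_rpow hT0 h.le hp1.le
    have hbk : b ≤ κ * t ^ (p - 1) := by
      rw [hTp] at hmono
      calc b = κ * (b / κ) := by field_simp
        _ ≤ κ * t ^ (p - 1) := mul_le_mul_of_nonneg_left hmono hκ.le
    have htp : t ^ p = t ^ (p - 1) * t := by
      rw [← Real.rpow_add_one ht0.ne' (p - 1)]; ring_nf
    have : b * t ≤ κ * t ^ p := by
      rw [htp, ← mul_assoc]
      exact mul_le_mul_of_nonneg_right hbk ht0.le
    nlinarith [mul_nonneg hb hT0]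

set_option maxHeartbeats 2000000 in
lemma kpLower {X : Type*} [NormedAddCommGroup X] [NormedSpace ℝ X]
    {p : ℝ} (hp : 2 ≤ p) {C : ℝ} (hC : 0 < C)
    (hconv : ∀ ε : ℝ, 0 < ε → ε ≤ 2 → ∀ x y : X, ‖x‖ = 1 → ‖y‖ = 1 → ε ≤ ‖x - y‖ →
      C * ε ^ p ≤ 1 - ‖x + y‖ / 2) :
    ∃ c : ℝ, 0 < c ∧ ∀ x y : X, c * ‖x - y‖ ^ p ≤ Kp p x y := by
  have hp0 : (0:ℝ) < p := by linarith
  set C₀ : ℝ := min C ((3/16) * (4/3) ^ p * (3/8) ^ (p-1)) with hC₀def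
  have hC₀ : 0 < C₀ := lt_min hC (by positivity)
  have hC₀C : C₀ ≤ C := min_le_left _ _
  -- the cap property : 2 * C₀ * (3/4)^p * (3/8)^(1-p) ≤ 3/8
  have hcap : 2 * C₀ * (3/4) ^ p * (3/8) ^ (1-p) ≤ 3/8 := by
    have h1 : C₀ ≤ (3/16) * (4/3) ^ p * (3/8) ^ (p-1) := min_le_right _ _
    have h2 : (0:ℝ) < (3/4:ℝ) ^ p := by positivity
    have h3 : (0:ℝ) < (3/8:ℝ) ^ (1-p) := by positivity
    calc 2 * C₀ * (3/4) ^ p * (3/8) ^ (1-p)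
        ≤ 2 * ((3/16) * (4/3) ^ p * (3/8) ^ (p-1)) * (3/4) ^ p * (3/8) ^ (1-p) := by
          have := mul_le_mul_of_nonneg_right (mul_le_mul_of_nonneg_right
            (mul_le_mul_of_nonneg_left h1 (by norm_num : (0:ℝ) ≤ 2)) h2.le) h3.le
          linarith
      _ = 3/8 * ((4/3) ^ p * (3/4) ^ p) * ((3/8) ^ (p-1) * (3/8) ^ (1-p)) := by ring
      _ = 3/8 := by
          rw [← Real.mul_rpow (by norm_num) (by norm_num),
            ← Real.rpow_add (by norm_num : (0:ℝ) < 3/8)]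
          norm_num
  refine ⟨min ((4:ℝ)⁻¹ ^ p) (2 * p * C₀ * (3/4) ^ p), lt_min (by positivity) (by positivity), ?_⟩
  set c : ℝ := min ((4:ℝ)⁻¹ ^ p) (2 * p * C₀ * (3/4) ^ p) with hcdef
  have hc1 : c ≤ (4:ℝ)⁻¹ ^ p := min_le_left _ _
  have hc2 : c ≤ 2 * p * C₀ * (3/4) ^ p := min_le_right _ _
  -- reduce to the case ‖y‖ ≤ ‖x‖
  suffices H : ∀ x y : X, ‖y‖ ≤ ‖x‖ → c * ‖x - y‖ ^ p ≤ Kp p x y by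
    intro x y
    rcases le_total (‖y‖) (‖x‖) with h | h
    · exact H x y h
    · have := H y x h
      rw [norm_sub_rev] at this
      unfold Kp at this ⊢
      rw [add_comm y x] at this
      linarith
  intro x y hba
  set a := ‖x‖ with hadef
  set b := ‖y‖ with hbdef
  set d := ‖x - y‖ with hddef
  have ha0 : 0 ≤ a := norm_nonneg x
  have hb0 : 0 ≤ b := norm_nonneg y
  have hd0 : 0 ≤ d := norm_nonneg _
  have hdab : d ≤ a + b := norm_sub_le x y
  have htd : a - b ≤ d := by
    have := abs_norm_sub_norm_le x y
    rw [abs_le] at this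
    linarith [this.2]
  have hM : ‖x + y‖ ≤ a + b := norm_add_le x y
  have hM0 : 0 ≤ ‖x + y‖ := norm_nonneg _
  have hMp : ‖x + y‖ ^ p ≤ (a + b) ^ p := Real.rpow_le_rpow hM0 hM hp0.le
  have hclark : (a + b) ^ p + (a - b) ^ p ≤ 2 ^ (p-1) * (a ^ p + b ^ p) := by
    have := auxClarkson hp ha0 hb0
    rwa [abs_of_nonneg (by linarith : (0:ℝ) ≤ a - b)] at this
  rcases le_or_gt (d/4) (a - b) with hcase | hcase
  · -- Case 1 : norms differ a lot
    have h1 : (d/4) ^ p ≤ (a - b) ^ p := Real.rpow_le_rpow (by linarith) hcase hp0.le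
    have h2 : (d/4) ^ p = (4:ℝ)⁻¹ ^ p * d ^ p := by
      rw [← Real.mul_rpow (by norm_num) hd0]
      norm_num
      congr 1
      ring
    have h3 : c * d ^ p ≤ (4:ℝ)⁻¹ ^ p * d ^ p :=
      mul_le_mul_of_nonneg_right hc1 (Real.rpow_nonneg hd0 p)
    unfold Kp
    rw [← hadef, ← hbdef]
    have h4 : ‖x + y‖ ^ p + (a-b) ^ p ≤ 2 ^ (p-1) * a ^ p + 2 ^ (p-1) * b ^ p := by
      linarith [hclark, hMp]
    calc c * d ^ p ≤ (4:ℝ)⁻¹ ^ p * d ^ p := h3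
      _ = (d/4) ^ p := h2.symm
      _ ≤ (a - b) ^ p := h1
      _ ≤ 2 ^ (p-1) * a ^ p + 2 ^ (p-1) * b ^ p - ‖x + y‖ ^ p := by linarith
  · -- Case 2 : norms close
    rcases eq_or_lt_of_le hd0 with hd | hd
    · -- d = 0
      rw [← hd, Real.zero_rpow hp0.ne', mul_zero]
      unfold Kp
      rw [← hadef, ← hbdef]
      have : (a-b) ^ p ≥ 0 := Real.rpow_nonneg (by linarith) p
      linarith
    have hb38 : 3 * d / 8 ≤ b := by linarith
    have hbpos : 0 < b := lt_of_lt_of_le (by linarith) hb38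
    have hapos : 0 < a := lt_of_lt_of_le hbpos hba
    set x' : X := (b / a) • x with hx'def
    have hx'norm : ‖x'‖ = b := by
      rw [hx'def, norm_smul, Real.norm_eq_abs, abs_of_nonneg (by positivity), ← hadef]
      field_simp
    have hxx' : ‖x - x'‖ = a - b := by
      have : x - x' = (1 - b / a) • x := by
        rw [hx'def, sub_smul, one_smul]
      rw [this, norm_smul, Real.norm_eq_abs, abs_of_nonneg (by
        rw [sub_nonneg]; exact div_le_one_of_le₀ hba ha0), ← hadef]
      field_simp
    have hx'y : 3 * d / 4 ≤ ‖x' - y‖ := by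
      have h1 : ‖x - y‖ ≤ ‖x - x'‖ + ‖x' - y‖ := by
        have := norm_sub_le_norm_sub_add_norm_sub x x' y
        linarith [norm_sub_le_norm_sub_add_norm_sub x x' y]
      rw [hxx'] at h1
      rw [← hddef] at h1
      linarith
    -- unit vectors
    set u : X := b⁻¹ • x' with hudef
    set v : X := b⁻¹ • y with hvdef
    have hun : ‖u‖ = 1 := by
      rw [hudef, norm_smul, Real.norm_eq_abs, abs_of_nonneg (by positivity), hx'norm]
      field_simp
    have hvn : ‖v‖ = 1 := by
      rw [hvdef, norm_smul, Real.norm_eq_abs, abs_of_nonneg (by positivity), ← hbdef]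
      field_simp
    set ε : ℝ := 3 * d / (4 * b) with hεdef
    have hε0 : 0 < ε := by positivity
    have huv : ‖u - v‖ = ‖x' - y‖ / b := by
      rw [hudef, hvdef, ← smul_sub, norm_smul, Real.norm_eq_abs,
        abs_of_nonneg (by positivity)]
      field_simp
    have hεuv : ε ≤ ‖u - v‖ := by
      rw [huv, hεdef, show 3 * d / (4 * b) = (3 * d / 4) / b by ring]
      exact div_le_div_of_nonneg_right hx'y hbpos.le
    have hε2 : ε ≤ 2 := by
      calc ε ≤ ‖u - v‖ := hεuv
        _ ≤ ‖u‖ + ‖v‖ := norm_sub_le u v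
        _ = 2 := by rw [hun, hvn]; norm_num
    have hcv := hconv ε hε0 hε2 u v hun hvn hεuv
    have hCC : C₀ * ε ^ p ≤ C * ε ^ p :=
      mul_le_mul_of_nonneg_right hC₀C (Real.rpow_nonneg hε0.le p)
    have huvsum : ‖u + v‖ = ‖x' + y‖ / b := by
      rw [hudef, hvdef, ← smul_add, norm_smul, Real.norm_eq_abs,
        abs_of_nonneg (by positivity)]
      field_simp
    -- ‖x' + y‖ ≤ 2b - 2b C₀ ε^p
    have hsum1 : ‖x' + y‖ ≤ 2 * b - 2 * b * (C₀ * ε ^ p) := by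
      have h1 : C₀ * ε ^ p ≤ 1 - ‖x' + y‖ / b / 2 := by
        rw [← huvsum]; linarith
      have h2 := mul_le_mul_of_nonneg_left h1 (by linarith : (0:ℝ) ≤ 2 * b)
      have h3 : 2 * b * (1 - ‖x' + y‖ / b / 2) = 2 * b - ‖x' + y‖ := by
        field_simp
        all_goals ring
      rw [h3] at h2
      linarith
    set γ : ℝ := 2 * C₀ * (3/4) ^ p * d ^ p * b ^ (1-p) with hγdef
    have hεp : ε ^ p = (3/4) ^ p * d ^ p * (b ^ p)⁻¹ := by
      have : ε = (3/4) * d * b⁻¹ := by rw [hεdef]; field_simp; all_goals ring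
      rw [this, Real.mul_rpow (by positivity) (by positivity),
        Real.mul_rpow (by norm_num) hd0, Real.inv_rpow hbpos.le]
    have hγeq : 2 * b * (C₀ * ε ^ p) = γ := by
      rw [hγdef, hεp]
      have hb1p : b ^ (1-p) = b * (b ^ p)⁻¹ := by
        rw [Real.rpow_sub hbpos, Real.rpow_one, div_eq_mul_inv]
      rw [hb1p]
      ring
    have hγpos : 0 < γ := by
      rw [hγdef]
      have h1 : (0:ℝ) < (3/4:ℝ) ^ p := Real.rpow_pos_of_pos (by norm_num) _
      have h2 : (0:ℝ) < d ^ p := Real.rpow_pos_of_pos hd _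
      have h3 : (0:ℝ) < b ^ (1-p) := Real.rpow_pos_of_pos hbpos _
      have h4 : (0:ℝ) < 2 * C₀ := by linarith
      exact mul_pos (mul_pos (mul_pos h4 h1) h2) h3
    have hγd : γ ≤ 3 * d / 8 := by
      have hmono : b ^ (1-p) ≤ (3 * d / 8) ^ (1-p) :=
        Real.rpow_le_rpow_of_nonpos (by linarith) hb38 (by linarith)
      have h38 : (3 * d / 8) ^ (1-p) = (3/8) ^ (1-p) * d ^ (1-p) := by
        rw [show 3 * d / 8 = (3/8) * d by ring, Real.mul_rpow (by norm_num) hd0]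
      have hdd : d ^ p * d ^ (1-p) = d := by
        rw [← Real.rpow_add hd, show p + (1-p) = 1 by ring, Real.rpow_one]
      calc γ = 2 * C₀ * (3/4) ^ p * d ^ p * b ^ (1-p) := hγdef
        _ ≤ 2 * C₀ * (3/4) ^ p * d ^ p * ((3/8) ^ (1-p) * d ^ (1-p)) := by
            rw [← h38]
            exact mul_le_mul_of_nonneg_left hmono (by positivity)
        _ = (2 * C₀ * (3/4) ^ p * (3/8) ^ (1-p)) * (d ^ p * d ^ (1-p)) := by ring
        _ = (2 * C₀ * (3/4) ^ p * (3/8) ^ (1-p)) * d := by rw [hdd]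
        _ ≤ 3/8 * d := mul_le_mul_of_nonneg_right hcap hd0
        _ = 3 * d / 8 := by ring
    have hγb : γ ≤ b := le_trans hγd hb38
    set A : ℝ := a + b with hAdef
    have hMA : ‖x + y‖ ≤ A - γ := by
      have h1 : ‖x + y‖ ≤ ‖x' + y‖ + ‖x - x'‖ := by
        calc ‖x + y‖ = ‖(x' + y) + (x - x')‖ := by congr 1; abel
          _ ≤ ‖x' + y‖ + ‖x - x'‖ := norm_add_le _ _
      rw [hxx'] at h1
      rw [hγeq] at hsum1
      rw [hAdef]
      linarith
    have hAγb : b ≤ A - γ := by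
      rw [hAdef]
      have : γ ≤ a := le_trans hγb hba
      linarith [le_trans hγd hb38, hba]
    have hAγ0 : 0 ≤ A - γ := le_trans hb0 hAγb
    have hMpA : ‖x + y‖ ^ p ≤ (A - γ) ^ p := Real.rpow_le_rpow hM0 hMA hp0.le
    have htang : (A - γ) ^ p + p * (A - γ) ^ (p-1) * γ ≤ A ^ p := by
      have := auxTangent hp hAγ0 (by linarith : (0:ℝ) ≤ A)
      have hAA : A - (A - γ) = γ := by ring
      calc (A - γ) ^ p + p * (A - γ) ^ (p-1) * γ
          = (A - γ) ^ p + p * (A - γ) ^ (p-1) * (A - (A - γ)) := by rw [hAA]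
        _ ≤ A ^ p := this
    have hpow1 : b ^ (p-1) ≤ (A - γ) ^ (p-1) :=
      Real.rpow_le_rpow hb0 hAγb (by linarith)
    have hfinal : p * b ^ (p-1) * γ ≤ p * (A - γ) ^ (p-1) * γ := by
      have := mul_le_mul_of_nonneg_right (mul_le_mul_of_nonneg_left hpow1 hp0.le) hγpos.le
      linarith
    have hγval : p * b ^ (p-1) * γ = 2 * p * C₀ * (3/4) ^ p * d ^ p := by
      rw [hγdef]
      have : b ^ (p-1) * b ^ (1-p) = 1 := by
        rw [← Real.rpow_add hbpos, show p - 1 + (1-p) = 0 by ring, Real.rpow_zero]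
      calc p * b ^ (p-1) * (2 * C₀ * (3/4) ^ p * d ^ p * b ^ (1-p))
          = (2 * p * C₀ * (3/4) ^ p * d ^ p) * (b ^ (p-1) * b ^ (1-p)) := by ring
        _ = 2 * p * C₀ * (3/4) ^ p * d ^ p := by rw [this]; ring
    have hcd : c * d ^ p ≤ 2 * p * C₀ * (3/4) ^ p * d ^ p :=
      mul_le_mul_of_nonneg_right hc2 (Real.rpow_nonneg hd0 p)
    -- assemble
    unfold Kp
    rw [← hadef, ← hbdef]
    have hAP : A ^ p ≤ 2 ^ (p-1) * a ^ p + 2 ^ (p-1) * b ^ p := by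
      have h0 : 0 ≤ (a - b) ^ p := Real.rpow_nonneg (by linarith) p
      rw [hAdef]
      linarith [hclark, h0]
    calc c * d ^ p ≤ 2 * p * C₀ * (3/4) ^ p * d ^ p := hcd
      _ = p * b ^ (p-1) * γ := hγval.symm
      _ ≤ p * (A - γ) ^ (p-1) * γ := hfinal
      _ ≤ A ^ p - (A - γ) ^ p := by linarith
      _ ≤ A ^ p - ‖x + y‖ ^ p := by linarith
      _ ≤ 2 ^ (p-1) * a ^ p + 2 ^ (p-1) * b ^ p - ‖x + y‖ ^ p := by linarith

lemma subgradNorm {X : Type*} [NormedAddCommGroup X] [NormedSpace ℝ X]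
    {p : ℝ} (hp : 2 ≤ p) (x : X) :
    ∃ g : X →L[ℝ] ℝ, ∀ w : X, ‖x‖ ^ p + g (w - x) ≤ ‖w‖ ^ p := by
  rcases eq_or_ne x 0 with rfl | hx
  · refine ⟨0, fun w => ?_⟩
    simp only [norm_zero, ContinuousLinearMap.zero_apply, add_zero]
    rw [Real.zero_rpow (by positivity : p ≠ 0)]
    exact Real.rpow_nonneg (norm_nonneg w) p
  · obtain ⟨g₁, hg₁, hg₁x⟩ := exists_dual_vector ℝ x (norm_ne_zero_iff.mpr hx)
    refine ⟨(p * ‖x‖ ^ (p-1)) • g₁, fun w => ?_⟩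
    have hgw : g₁ w ≤ ‖w‖ := by
      calc g₁ w ≤ |g₁ w| := le_abs_self _
        _ = ‖g₁ w‖ := (Real.norm_eq_abs _).symm
        _ ≤ ‖g₁‖ * ‖w‖ := g₁.le_opNorm w
        _ = ‖w‖ := by rw [hg₁]; ring
    have hcoef : (0:ℝ) ≤ p * ‖x‖ ^ (p-1) := by
      have := Real.rpow_nonneg (norm_nonneg x) (p-1)
      nlinarith
    have happ : ((p * ‖x‖ ^ (p-1)) • g₁) (w - x) = p * ‖x‖ ^ (p-1) * (g₁ w - ‖x‖) := by
      simp only [ContinuousLinearMap.smul_apply, map_sub, smul_eq_mul]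
      rw [show (g₁ x : ℝ) = ‖x‖ from hg₁x]
      ring
    rw [happ]
    have h1 : p * ‖x‖ ^ (p-1) * (g₁ w - ‖x‖) ≤ p * ‖x‖ ^ (p-1) * (‖w‖ - ‖x‖) :=
      mul_le_mul_of_nonneg_left (by linarith) hcoef
    have h2 := auxTangent hp (norm_nonneg x) (norm_nonneg w)
    linarith

lemma subgradStrong {X : Type*} [NormedAddCommGroup X] [NormedSpace ℝ X]
    {p : ℝ} (hp : 2 ≤ p) {c : ℝ}
    (hK : ∀ u w : X, c * ‖u - w‖ ^ p ≤ Kp p u w) (x : X) :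
    ∃ g : X →L[ℝ] ℝ, ∀ w : X,
      ‖x‖ ^ p + g (w - x) + 2 ^ (1-p) * c * ‖w - x‖ ^ p ≤ ‖w‖ ^ p := by
  obtain ⟨g, hg⟩ := subgradNorm hp x
  refine ⟨g, fun w => ?_⟩
  set m : X := x + (2⁻¹ : ℝ) • (w - x) with hm
  have hmnorm : ‖m‖ ^ p = 2 ^ (-p) * ‖x + w‖ ^ p := by
    have hme : m = (2⁻¹ : ℝ) • (x + w) := by
      rw [hm, smul_add, smul_sub]
      module
    rw [hme, norm_smul, Real.norm_eq_abs, abs_of_nonneg (by norm_num : (0:ℝ) ≤ 2⁻¹),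
      Real.mul_rpow (by norm_num) (norm_nonneg _), ← Real.rpow_neg_one 2,
      ← Real.rpow_mul (by norm_num : (0:ℝ) ≤ 2)]
    norm_num
  have hgm := hg m
  have hgw : g (m - x) = 2⁻¹ * g (w - x) := by
    have h : m - x = (2⁻¹ : ℝ) • (w - x) := by rw [hm]; abel
    rw [h, map_smul, smul_eq_mul]
  have e1 : (2:ℝ) ^ (1-p) * 2 ^ (p-1) = 1 := by
    rw [← Real.rpow_add (by norm_num : (0:ℝ) < 2)]
    norm_num
  have e2 : (2:ℝ) ^ (1-p) = 2 * 2 ^ (-p) := by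
    rw [show (1:ℝ) - p = 1 + -p by ring, Real.rpow_add (by norm_num : (0:ℝ) < 2),
      Real.rpow_one]
  have hkey : 2 ^ (1-p) * Kp p x w = ‖x‖ ^ p + ‖w‖ ^ p - 2 * ‖m‖ ^ p := by
    unfold Kp
    rw [hmnorm]
    linear_combination (‖x‖ ^ p + ‖w‖ ^ p) * e1 - ‖x + w‖ ^ p * e2
  have h3 : 2 ^ (1-p) * (c * ‖w - x‖ ^ p) ≤ 2 ^ (1-p) * Kp p x w := by
    have := hK x w
    rw [norm_sub_rev] at this
    exact mul_le_mul_of_nonneg_left this (Real.rpow_nonneg (by norm_num) _)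
  rw [hgw] at hgm
  linarith [hgm, hkey, h3]

lemma jensenNormPow {X : Type*} [NormedAddCommGroup X] [NormedSpace ℝ X]
    {p : ℝ} (hp : 2 ≤ p) {c : ℝ}
    (hK : ∀ u w : X, c * ‖u - w‖ ^ p ≤ Kp p u w)
    {m : ℕ} (l : Fin m → ℝ) (z : Fin m → X)
    (hl : ∀ i, 0 ≤ l i) (hs : ∑ i, l i = 1) :
    ‖∑ i, l i • z i‖ ^ p + 2 ^ (1-p) * c * ∑ i, l i * ‖z i - ∑ j, l j • z j‖ ^ p
      ≤ ∑ i, l i * ‖z i‖ ^ p := by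
  set x : X := ∑ i, l i • z i with hx
  obtain ⟨g, hg⟩ := subgradStrong hp hK x
  have hterm : ∀ i, l i * ‖x‖ ^ p + g (l i • (z i - x))
      + 2 ^ (1-p) * c * (l i * ‖z i - x‖ ^ p) ≤ l i * ‖z i‖ ^ p := by
    intro i
    have := mul_le_mul_of_nonneg_left (hg (z i)) (hl i)
    rw [map_smul, smul_eq_mul]
    nlinarith [this]
  have hsum := Finset.sum_le_sum (s := Finset.univ) (fun i _ => hterm i)
  rw [Finset.sum_add_distrib, Finset.sum_add_distrib, ← Finset.sum_mul,
    ← map_sum, ← Finset.mul_sum] at hsum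
  have hz : (∑ i, l i • (z i - x)) = 0 := by
    simp only [smul_sub]
    rw [Finset.sum_sub_distrib, ← Finset.sum_smul, hs, one_smul, ← hx, sub_self]
  rw [hz, map_zero, add_zero, hs, one_mul] at hsum
  exact hsum

lemma chainBound {X : Type*} [NormedAddCommGroup X] [NormedSpace ℝ X]
    {f : X → ℝ} {a δ : ℝ} (hδ : 0 < δ) (ha : 0 ≤ a)
    (h : ∀ u v : X, dist u v < δ → dist (f u) (f v) ≤ a) (u v : X) :
    dist (f u) (f v) ≤ a * (‖u - v‖ / δ + 2) := by
  set N : ℕ := ⌈‖u - v‖ / δ⌉₊ + 1 with hN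
  have hN0 : 0 < N := Nat.succ_pos _
  have hNR : (0:ℝ) < N := by exact_mod_cast hN0
  set w : ℕ → X := fun k => u + ((k : ℝ) / N) • (v - u) with hw
  have hw0 : w 0 = u := by simp [hw]
  have hwN : w N = v := by
    simp only [hw]
    rw [div_self hNR.ne', one_smul]
    abel
  have hlt : ‖u - v‖ < N * δ := by
    have h1 : ‖u - v‖ / δ ≤ (⌈‖u - v‖ / δ⌉₊ : ℝ) := Nat.le_ceil _
    have h2 : ((⌈‖u - v‖ / δ⌉₊ : ℝ)) < N := by rw [hN]; push_cast; linarith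
    have h3 := lt_of_le_of_lt h1 h2
    calc ‖u - v‖ = (‖u - v‖ / δ) * δ := by field_simp
      _ < N * δ := mul_lt_mul_of_pos_right h3 hδ
  have hstep : ∀ k : ℕ, dist (w k) (w (k+1)) < δ := by
    intro k
    have hdiff : w (k+1) - w k = ((1:ℝ)/N) • (v - u) := by
      calc w (k+1) - w k = ((((k+1):ℕ):ℝ)/N - ((k:ℕ):ℝ)/N) • (v - u) := by
            simp only [hw, sub_smul]
            abel
        _ = ((1:ℝ)/N) • (v - u) := by
            congr 1
            push_cast
            ring
    rw [dist_comm, dist_eq_norm, hdiff, norm_smul, Real.norm_eq_abs,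
      abs_of_nonneg (by positivity : (0:ℝ) ≤ 1/N), norm_sub_rev]
    rw [div_mul_eq_mul_div, one_mul, div_lt_iff₀ hNR]
    linarith [hlt]
  have htel := dist_le_range_sum_dist (fun k => f (w k)) N
  simp only [hw0, hwN] at htel
  have hsum : ∑ i ∈ Finset.range N, dist (f (w i)) (f (w (i+1))) ≤ N * a := by
    calc ∑ i ∈ Finset.range N, dist (f (w i)) (f (w (i+1)))
        ≤ ∑ _i ∈ Finset.range N, a :=
          Finset.sum_le_sum (fun i _ => h _ _ (hstep i))
      _ = N * a := by rw [Finset.sum_const, Finset.card_range, nsmul_eq_mul]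
  have hNle : (N:ℝ) ≤ ‖u - v‖ / δ + 2 := by
    have := Nat.ceil_lt_add_one (by positivity : (0:ℝ) ≤ ‖u - v‖ / δ)
    rw [hN]
    push_cast
    linarith
  calc dist (f u) (f v) ≤ N * a := le_trans htel hsum
    _ = a * (N:ℝ) := by ring
    _ ≤ a * (‖u - v‖ / δ + 2) := mul_le_mul_of_nonneg_left hNle ha

lemma kpSelf {X : Type*} [NormedAddCommGroup X] [NormedSpace ℝ X]
    {p : ℝ} (hp : 2 ≤ p) (z : X) : Kp p z z = 0 := by
  unfold Kp
  have h1 : ‖z + z‖ = 2 * ‖z‖ := by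
    rw [← two_smul ℝ z, norm_smul, Real.norm_ofNat]
  have h2 : ‖z + z‖ ^ p = 2 ^ p * ‖z‖ ^ p := by
    rw [h1, Real.mul_rpow (by norm_num) (norm_nonneg z)]
  have h3 : (2:ℝ) ^ p = 2 ^ (p-1) * 2 := by
    rw [← Real.rpow_add_one (by norm_num : (2:ℝ) ≠ 0) (p-1)]
    ring_nf
  rw [h2, h3]
  ring

set_option maxHeartbeats 2000000 in
/-- Let `p ≥ 2`, let the norm of the Banach space `X` be uniformly smooth with modulus
of convexity of power type `p`, and let `f : X → ℝ` be uniformly continuous on `X`.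
Then `Δ_n^p f → f` uniformly on `X`. -/
theorem stmt_4 {X : Type*} [NormedAddCommGroup X] [NormedSpace ℝ X] [CompleteSpace X]
    (p : ℝ) (hp : 2 ≤ p)
    (hUS : Filter.Tendsto
      (fun τ : ℝ => (sSup {r : ℝ | ∃ x y : X, ‖x‖ = 1 ∧ ‖y‖ = 1 ∧
        r = (‖x + τ • y‖ + ‖x - τ • y‖) / 2 - 1}) / τ)
      (nhdsWithin 0 (Set.Ioi (0 : ℝ))) (nhds 0))
    (hconv : ∃ C : ℝ, 0 < C ∧ ∀ ε : ℝ, 0 < ε → ε ≤ 2 →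
      ∀ x y : X, ‖x‖ = 1 → ‖y‖ = 1 → ε ≤ ‖x - y‖ → C * ε ^ p ≤ 1 - ‖x + y‖ / 2)
    (f : X → ℝ)
    (hu : UniformContinuous f) :
    TendstoUniformly (fun (n : ℕ) (x : X) => DeltaR p f n x) f Filter.atTop := by
  obtain ⟨C, hC, hconvC⟩ := hconv
  obtain ⟨c, hc, hK⟩ := kpLower hp hC hconvC
  have hp0 : (0:ℝ) < p := by linarith
  have hp1 : (0:ℝ) < p - 1 := by linarith
  have e1 : (2:ℝ) ^ (p-1) * 2 ^ (1-p) = 1 := by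
    rw [← Real.rpow_add (by norm_num : (0:ℝ) < 2)]
    norm_num
  rw [Metric.tendstoUniformly_iff]
  intro η hη
  have ha : 0 < η/8 := by linarith
  set a := η/8 with hadef
  obtain ⟨δ, hδ, hfδ⟩ := Metric.uniformContinuous_iff.mp hu a ha
  have hchain : ∀ u v : X, dist (f u) (f v) ≤ a * (‖u - v‖/δ + 2) :=
    chainBound hδ ha.le (fun u v huv => (hfδ huv).le)
  set b := a/δ with hbdef
  have hb : 0 < b := div_pos ha hδ
  have hbδ : b * δ = a := by rw [hbdef]; field_simp
  have hchain' : ∀ u v : X, f u - f v ≤ 2*a + b*‖u - v‖ := by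
    intro u v
    have h1 := hchain u v
    have h2 : f u - f v ≤ dist (f u) (f v) := by
      rw [Real.dist_eq]; exact le_abs_self _
    have h3 : a * (‖u - v‖/δ + 2) = 2*a + b*‖u - v‖ := by
      rw [hbdef]; field_simp; ring
    linarith
  have h2δ : (0:ℝ) < (2*δ) ^ (p-1) := Real.rpow_pos_of_pos (by linarith) _
  obtain ⟨N₀, hN₀⟩ := exists_nat_gt (b / (c * (2*δ) ^ (p-1)))
  rw [Filter.eventually_atTop]
  refine ⟨N₀ + 1, fun n hn => ?_⟩
  have hn1 : 1 ≤ n := le_trans (Nat.le_add_left 1 N₀) hn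
  have hnR : (1:ℝ) ≤ (n:ℝ) := by exact_mod_cast hn1
  have hnc : (0:ℝ) < (n:ℝ) * c := mul_pos (by linarith) hc
  set T := (b / ((n:ℝ)*c)) ^ (1/(p-1)) with hTdef
  have hT0 : 0 ≤ T := Real.rpow_nonneg (div_nonneg hb.le hnc.le) _
  have hTlt : T < 2*δ := by
    have hnn : b / (c * (2*δ) ^ (p-1)) < (n:ℝ) := by
      calc b / (c * (2*δ) ^ (p-1)) < (N₀:ℝ) := hN₀
        _ ≤ (n:ℝ) := by exact_mod_cast le_trans (Nat.le_succ N₀) hn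
    have hpos : (0:ℝ) < c * (2*δ) ^ (p-1) := mul_pos hc h2δ
    have hb' : b < (n:ℝ) * (c * (2*δ) ^ (p-1)) := by
      rw [div_lt_iff₀ hpos] at hnn
      linarith
    have hdiv : b / ((n:ℝ)*c) < (2*δ) ^ (p-1) := by
      rw [div_lt_iff₀ hnc]
      calc b < (n:ℝ) * (c * (2*δ) ^ (p-1)) := hb'
        _ = (2*δ) ^ (p-1) * ((n:ℝ)*c) := by ring
    calc T < ((2*δ) ^ (p-1)) ^ (1/(p-1)) := by
          rw [hTdef]
          exact Real.rpow_lt_rpow (div_nonneg hb.le hnc.le) hdiv (by positivity)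
      _ = 2*δ := by
          rw [one_div, Real.rpow_rpow_inv (by linarith) hp1.ne']
  have hyoung : ∀ t : ℝ, 0 ≤ t → b * t ≤ (n:ℝ)*c*t^p + b*T := by
    intro t ht
    have := auxYoung hp hnc hb.le ht
    rw [← hTdef] at this
    exact this
  -- lower bound for the integrand of the infimum
  have hlow : ∀ z y : X, f z - 2*a - b*T ≤ f y + (n:ℝ) * Kp p z y := by
    intro z y
    have h1 := hchain' z y
    have h2 := hyoung ‖z - y‖ (norm_nonneg _)
    have h3 : (n:ℝ)*(c*‖z - y‖^p) ≤ (n:ℝ) * Kp p z y :=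
      mul_le_mul_of_nonneg_left (hK z y) (by linarith)
    linarith
  have hbdd : ∀ z : X, BddBelow (Set.range fun y => f y + (n:ℝ) * Kp p z y) :=
    fun z => ⟨f z - 2*a - b*T, by rintro r ⟨y, rfl⟩; exact hlow z y⟩
  have hinf_low : ∀ z : X, f z - 2*a - b*T ≤ ⨅ y, f y + (n:ℝ) * Kp p z y :=
    fun z => le_ciInf (hlow z)
  have hinf_up : ∀ z : X, (⨅ y, f y + (n:ℝ) * Kp p z y) ≤ f z := by
    intro z
    have h := ciInf_le (hbdd z) z
    rwa [kpSelf hp z, mul_zero, add_zero] at h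
  have hg_low : ∀ z : X, f z - (2*a + b*T) + 2^(p-1)*(n:ℝ)*‖z‖^p ≤ gnpR p f n z := by
    intro z
    unfold gnpR
    have := hinf_low z
    linarith
  have hg_up : ∀ z : X, gnpR p f n z ≤ f z + 2^(p-1)*(n:ℝ)*‖z‖^p := by
    intro z
    unfold gnpR
    have := hinf_up z
    linarith
  intro x
  -- the envelope set
  set S : Set ℝ := { r : ℝ | ∃ (m : ℕ) (l : Fin m → ℝ) (z : Fin m → X),
    (∀ i, 0 < l i) ∧ ∑ i, l i = 1 ∧ ∑ i, l i • z i = x ∧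
      ∑ i, l i * gnpR p f n (z i) = r } with hSdef
  have hmem : gnpR p f n x ∈ S := by
    refine ⟨1, fun _ => (1:ℝ), fun _ => x, fun i => one_pos, by simp, by simp, by simp⟩
  have hSlb : ∀ r ∈ S, f x - (4*a + 2*b*T) + 2^(p-1)*(n:ℝ)*‖x‖^p ≤ r := by
    rintro r ⟨m, l, z, hlpos, hlsum, hzsum, rfl⟩
    have hl0 : ∀ i, 0 ≤ l i := fun i => (hlpos i).le
    set s1 := ∑ i, l i * f (z i) with hs1
    set s2 := ∑ i, l i * ‖z i‖^p with hs2
    set s3 := ∑ i, l i * ‖z i - x‖^p with hs3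
    set s4 := ∑ i, l i * ‖z i - x‖ with hs4
    -- (1) sum of weighted gnpR lower bounds
    have h1 : s1 - (2*a + b*T) + 2^(p-1)*(n:ℝ)*s2 ≤ ∑ i, l i * gnpR p f n (z i) := by
      have hper : ∀ i ∈ Finset.univ, l i * (f (z i) - (2*a + b*T) + 2^(p-1)*(n:ℝ)*‖z i‖^p)
          ≤ l i * gnpR p f n (z i) :=
        fun i _ => mul_le_mul_of_nonneg_left (hg_low (z i)) (hl0 i)
      have hsum := Finset.sum_le_sum hper
      have hre : ∀ i : Fin m, l i * (f (z i) - (2*a + b*T) + 2^(p-1)*(n:ℝ)*‖z i‖^p)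
          = l i * f (z i) - (2*a + b*T) * l i + 2^(p-1)*(n:ℝ)*(l i * ‖z i‖^p) :=
        fun i => by ring
      rw [Finset.sum_congr rfl (fun i _ => hre i), Finset.sum_add_distrib,
        Finset.sum_sub_distrib, ← Finset.mul_sum, ← Finset.mul_sum, hlsum, mul_one] at hsum
      exact hsum
    -- (2) chaining bound
    have h2 : f x - 2*a - b*s4 ≤ s1 := by
      have hper : ∀ i ∈ Finset.univ, l i * (f x - 2*a) - b*(l i * ‖z i - x‖)
          ≤ l i * f (z i) := by
        intro i _
        have hc2 := hchain' x (z i)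
        rw [norm_sub_rev] at hc2
        have := mul_le_mul_of_nonneg_left (by linarith : f x - 2*a - b*‖z i - x‖ ≤ f (z i)) (hl0 i)
        nlinarith [this]
      have hsum := Finset.sum_le_sum hper
      rw [Finset.sum_sub_distrib, ← Finset.sum_mul, ← Finset.mul_sum, hlsum, one_mul] at hsum
      linarith [hsum]
    -- (3) Jensen
    have hjen := jensenNormPow hp hK l z hl0 hlsum
    rw [hzsum] at hjen
    have h3 : 2^(p-1)*(n:ℝ)*‖x‖^p + (n:ℝ)*c*s3 ≤ 2^(p-1)*(n:ℝ)*s2 := by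
      have hE : (0:ℝ) ≤ 2^(p-1)*(n:ℝ) := by positivity
      have hmul := mul_le_mul_of_nonneg_left hjen hE
      have hkey : 2^(p-1)*(n:ℝ) * (2^(1-p)*c*s3) = (n:ℝ)*c*s3 := by
        calc 2^(p-1)*(n:ℝ) * (2^(1-p)*c*s3) = ((2:ℝ)^(p-1) * 2^(1-p)) * ((n:ℝ)*c*s3) := by ring
          _ = (n:ℝ)*c*s3 := by rw [e1]; ring
      nlinarith [hmul, hkey]
    -- (4) Young on each term
    have h4 : b*s4 ≤ (n:ℝ)*c*s3 + b*T := by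
      have hper : ∀ i ∈ Finset.univ, l i * (b * ‖z i - x‖)
          ≤ l i * ((n:ℝ)*c*‖z i - x‖^p + b*T) :=
        fun i _ => mul_le_mul_of_nonneg_left (hyoung _ (norm_nonneg _)) (hl0 i)
      have hsum := Finset.sum_le_sum hper
      have hre1 : ∀ i : Fin m, l i * (b * ‖z i - x‖) = b * (l i * ‖z i - x‖) :=
        fun i => by ring
      have hre2 : ∀ i : Fin m, l i * ((n:ℝ)*c*‖z i - x‖^p + b*T)
          = (n:ℝ)*c*(l i * ‖z i - x‖^p) + (b*T) * l i := fun i => by ring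
      rw [Finset.sum_congr rfl (fun i _ => hre1 i), ← Finset.mul_sum] at hsum
      rw [Finset.sum_congr rfl (fun i _ => hre2 i), Finset.sum_add_distrib,
        ← Finset.mul_sum, ← Finset.mul_sum, hlsum, mul_one] at hsum
      exact hsum
    linarith
  have hbddS : BddBelow S :=
    ⟨f x - (4*a + 2*b*T) + 2^(p-1)*(n:ℝ)*‖x‖^p, fun r hr => hSlb r hr⟩
  have henv_up : convEnv (gnpR p f n) x ≤ f x + 2^(p-1)*(n:ℝ)*‖x‖^p := by
    have h := csInf_le hbddS hmem
    have h2 := hg_up x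
    unfold convEnv
    calc sInf _ ≤ gnpR p f n x := h
      _ ≤ _ := h2
  have henv_low : f x - (4*a + 2*b*T) + 2^(p-1)*(n:ℝ)*‖x‖^p ≤ convEnv (gnpR p f n) x :=
    le_csInf ⟨_, hmem⟩ (fun r hr => hSlb r hr)
  unfold DeltaR
  rw [Real.dist_eq, abs_sub_lt_iff]
  constructor
  · have : 4*a + 2*b*T < 8*a := by nlinarith [hTlt, hb, hbδ]
    linarith [henv_low]
  · linarith [henv_up, hT0, hb, ha]
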